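/- For every graph G with at least one vertex and every field F, the orthogonality dimension of G over F satisfies ξ̄_F(G) ≥ Xind(Hom(K_2, G)) + 2. -/

import Mathlib

open Module LinearMap

noncomputable def stdB (F : Type*) [Field F] (s : ℕ) :
    LinearMap.BilinForm F (Fin s → F) := Matrix.toBilin' 1

lemma stdB_apply {F : Type*} [Field F] {s : ℕ} (u v : Fin s → F) :
    stdB F s u v = ∑ i, u i * v i := by
  rw [stdB, Matrix.toBilin'_apply]
  simp [Matrix.one_apply, mul_ite]

lemma stdB_nondeg (F : Type*) [Field F] (s : ℕ) : (stdB F s).Nondegenerate :=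
  Matrix.Nondegenerate.toBilin' (Matrix.nondegenerate_of_det_ne_zero (by simp))

lemma stdB_refl (F : Type*) [Field F] (s : ℕ) : (stdB F s).IsRefl := by
  intro u v h
  rw [stdB_apply] at h ⊢
  rw [← h]
  exact Finset.sum_congr rfl fun i _ => mul_comm _ _

lemma span_le_orth {F : Type*} [Field F] {s : ℕ} (S T : Set (Fin s → F))
    (h : ∀ u ∈ S, ∀ w ∈ T, ∑ i, u i * w i = 0) :
    Submodule.span F T ≤ (stdB F s).orthogonal (Submodule.span F S) := by
  rw [Submodule.span_le]
  intro w hw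
  rw [SetLike.mem_coe, LinearMap.BilinForm.mem_orthogonal_iff]
  intro u hu
  have hker : Submodule.span F S ≤ LinearMap.ker ((stdB F s).flip w) := by
    rw [Submodule.span_le]
    intro u' hu'
    rw [SetLike.mem_coe, LinearMap.mem_ker]
    show stdB F s u' w = 0
    rw [stdB_apply]
    exact h u' hu' w hw
  have := hker hu
  rw [LinearMap.mem_ker] at this
  exact this

lemma finrank_add_le_of_orth {F : Type*} [Field F] {s : ℕ} (S T : Set (Fin s → F))
    (h : ∀ u ∈ S, ∀ w ∈ T, ∑ i, u i * w i = 0) :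
    finrank F (Submodule.span F S) + finrank F (Submodule.span F T) ≤ s := by
  have h1 := Submodule.finrank_mono (span_le_orth S T h)
  have h2 := LinearMap.BilinForm.finrank_orthogonal (stdB_nondeg F s)
    (Submodule.span F S)
  have h3 : finrank F (Fin s → F) = s := by simp
  have h4 : finrank F (Submodule.span F S) ≤ finrank F (Fin s → F) := Submodule.finrank_le _
  rw [h3] at h4
  omega



/-- The underlying set of the free `Z₂`-poset `Q n`: the elements `±1, …, ±(n+1)`,
encoded as nonzero integers of absolute value at most `n + 1`. -/
def QElem (n : ℕ) : Type := {i : ℤ // i ≠ 0 ∧ |i| ≤ n + 1}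

/-- The partial order of `Q n`: `p < q` iff `|p| < |q|`. -/
instance (n : ℕ) : PartialOrder (QElem n) where
  le p q := p = q ∨ |p.1| < |q.1|
  le_refl p := Or.inl rfl
  le_trans p q r h1 h2 := by
    rcases h1 with rfl | h1
    · exact h2
    · rcases h2 with rfl | h2
      · exact Or.inr h1
      · exact Or.inr (h1.trans h2)
  le_antisymm p q h1 h2 := by
    rcases h1 with rfl | h1
    · rfl
    · rcases h2 with rfl | h2
      · rfl
      · exact absurd (h1.trans h2) (lt_irrefl _)

/-- The involution `i ↦ -i` of `Q n`. -/
def QNeg (n : ℕ) : QElem n → QElem n :=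
  fun p => ⟨-p.1, neg_ne_zero.mpr p.2.1, by rw [abs_neg]; exact p.2.2⟩

/-- An order-preserving `Z₂`-map between two posets equipped with involutions. -/
def IsZ2Map {P Q : Type*} [PartialOrder P] [PartialOrder Q] (νP : P → P) (νQ : Q → Q)
    (f : P → Q) : Prop :=
  Monotone f ∧ ∀ p, f (νP p) = νQ (f p)

open Classical in
/-- The cross-index of a free `Z₂`-poset `(P, ν)` : the minimum `n` such that there is an
order-preserving `Z₂`-map from `P` to `Q n`, with the convention `-1` for the empty poset. -/
noncomputable def XindZ (P : Type*) [PartialOrder P] (νP : P → P) : ℤ :=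
  if Nonempty P then ((sInf {n : ℕ | ∃ f : P → QElem n, IsZ2Map νP (QNeg n) f} : ℕ) : ℤ)
  else -1

/-- The Hom complex `Hom(K₂, G)`: pairs `(X, Y)` of nonempty disjoint vertex sets such that
`G[X, Y]` is complete bipartite, ordered by componentwise inclusion. -/
def HomK2 {V : Type*} (G : SimpleGraph V) : Type _ :=
  {XY : Set V × Set V // XY.1.Nonempty ∧ XY.2.Nonempty ∧ Disjoint XY.1 XY.2 ∧
    ∀ a ∈ XY.1, ∀ b ∈ XY.2, G.Adj a b}

instance {V : Type*} (G : SimpleGraph V) : PartialOrder (HomK2 G) :=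
  Subtype.partialOrder _

/-- The involution `(X, Y) ↦ (Y, X)` of the Hom complex. -/
def HomK2Swap {V : Type*} (G : SimpleGraph V) : HomK2 G → HomK2 G :=
  fun p => ⟨(p.1.2, p.1.1), p.2.2.1, p.2.1, p.2.2.2.1.symm,
    fun b hb a ha => (p.2.2.2.2 a ha b hb).symm⟩

/-- For every graph `G` with at least one vertex and every field `F`, the
orthogonality dimension of `G` over `F` is at least `Xind(Hom(K₂, G)) + 2`: every
`s`-dimensional orthogonal representation of `G` over `F` satisfies
`s ≥ Xind(Hom(K₂, G)) + 2`. -/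
theorem orthdim_ge_Xind_add_two {V : Type*} [Fintype V] [Nonempty V] (G : SimpleGraph V)
    (F : Type*) [Field F] (s : ℕ) (x : V → (Fin s → F))
    (hself : ∀ v, ∑ i, x v i * x v i ≠ 0)
    (horth : ∀ u v, G.Adj u v → ∑ i, x u i * x v i = 0) :
    XindZ (HomK2 G) (HomK2Swap G) + 2 ≤ (s : ℤ) := by
  classical
  obtain ⟨v0⟩ := (inferInstance : Nonempty V)
  have hs1 : 1 ≤ s := by
    rcases Nat.eq_zero_or_pos s with hs | hs
    · exfalso; apply hself v0; subst hs; simp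
    · exact hs
  by_cases hne : Nonempty (HomK2 G)
  · -- abbreviations
    set sp : Set V → Submodule F (Fin s → F) := fun X => Submodule.span F (x '' X) with hsp
    have hx0 : ∀ v, x v ≠ 0 := by
      intro v hv; apply hself v; simp [hv]
    have horthset : ∀ p : HomK2 G, ∀ u ∈ x '' p.1.1, ∀ w ∈ x '' p.1.2,
        ∑ i, u i * w i = 0 := by
      rintro p u ⟨a, ha, rfl⟩ w ⟨b, hb, rfl⟩
      exact horth a b (p.2.2.2.2 a ha b hb)
    have hpos : ∀ (X : Set V), X.Nonempty → 1 ≤ Module.finrank F (sp X) := by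
      rintro X ⟨a, ha⟩
      by_contra h
      have h0 : Module.finrank F (sp X) = 0 := by omega
      rw [hsp, Submodule.finrank_eq_zero] at h0
      have hmem : x a ∈ sp X := Submodule.subset_span ⟨a, ha, rfl⟩
      rw [hsp] at hmem
      rw [h0] at hmem
      exact hx0 a (by simpa using hmem)
    have hsum : ∀ p : HomK2 G,
        Module.finrank F (sp p.1.1) + Module.finrank F (sp p.1.2) ≤ s :=
      fun p => finrank_add_le_of_orth _ _ (horthset p)
    have hnesp : ∀ p : HomK2 G, sp p.1.1 ≠ sp p.1.2 := by
      intro p heq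
      obtain ⟨a, ha⟩ := p.2.1
      have hxa : x a ∈ sp p.1.1 := Submodule.subset_span ⟨a, ha, rfl⟩
      have hle := span_le_orth _ _ (horthset p)
      have hxa2 : x a ∈ sp p.1.2 := by rw [← heq]; exact hxa
      have hmem : x a ∈ (stdB F s).orthogonal (sp p.1.1) := hle hxa2
      rw [LinearMap.BilinForm.mem_orthogonal_iff] at hmem
      have h0 : stdB F s (x a) (x a) = 0 := hmem (x a) hxa
      rw [stdB_apply] at h0
      exact hself a h0
    obtain ⟨p0⟩ := id hne
    have hs2 : 2 ≤ s := by
      have h1 := hpos _ p0.2.1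
      have h2 := hpos _ p0.2.2.1
      have h3 := hsum p0
      omega
    -- the map to Q (s - 2)
    set m : HomK2 G → ℤ := fun p =>
      (Module.finrank F (sp p.1.1) : ℤ) + (Module.finrank F (sp p.1.2) : ℤ) - 1 with hm
    set sgn : HomK2 G → ℤ := fun p =>
      if WellOrderingRel (sp p.1.1) (sp p.1.2) then 1 else -1 with hsgn
    have hm1 : ∀ p, 1 ≤ m p := by
      intro p
      have h1 := hpos _ p.2.1
      have h2 := hpos _ p.2.2.1
      rw [hm]
      push_cast
      omega
    have hms : ∀ p, m p ≤ (s : ℤ) - 1 := by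
      intro p
      have h3 := hsum p
      rw [hm]
      push_cast
      omega
    have habs : ∀ p, |sgn p * m p| = m p := by
      intro p
      rw [abs_mul, hsgn]
      have hmp := hm1 p
      rcases ite_eq_or_eq (WellOrderingRel (sp p.1.1) (sp p.1.2)) (1 : ℤ) (-1) with h | h <;>
        simp only [h] <;> rw [abs_of_nonneg (by omega : (0:ℤ) ≤ m p)] <;> norm_num
    have hcast : ((s - 2 : ℕ) : ℤ) + 1 = (s : ℤ) - 1 := by omega
    let f : HomK2 G → QElem (s - 2) := fun p =>
      ⟨sgn p * m p,
        by
          intro h0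
          have h2 := habs p
          rw [h0, abs_zero] at h2
          have h1 := hm1 p
          omega,
        by rw [habs p, hcast]; exact hms p⟩
    have hmemset : (s - 2) ∈ {n : ℕ | ∃ f : HomK2 G → QElem n,
        IsZ2Map (HomK2Swap G) (QNeg n) f} := by
      refine ⟨f, ?_, ?_⟩
      · -- monotone
        intro p q hpq
        have h1 : p.1.1 ⊆ q.1.1 := hpq.1
        have h2 : p.1.2 ⊆ q.1.2 := hpq.2
        have hU : sp p.1.1 ≤ sp q.1.1 := Submodule.span_mono (Set.image_mono h1)
        have hW : sp p.1.2 ≤ sp q.1.2 := Submodule.span_mono (Set.image_mono h2)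
        have hrU := Submodule.finrank_mono hU
        have hrW := Submodule.finrank_mono hW
        by_cases hcase : m p = m q
        · -- all data equal
          have heU : Module.finrank F (sp p.1.1) = Module.finrank F (sp q.1.1) := by
            rw [hm] at hcase; push_cast at hcase; omega
          have heW : Module.finrank F (sp p.1.2) = Module.finrank F (sp q.1.2) := by
            rw [hm] at hcase; push_cast at hcase; omega
          have hUeq : sp p.1.1 = sp q.1.1 :=
            Submodule.eq_of_le_of_finrank_le hU (le_of_eq heU.symm)
          have hWeq : sp p.1.2 = sp q.1.2 :=
            Submodule.eq_of_le_of_finrank_le hW (le_of_eq heW.symm)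
          have hsgneq : sgn p = sgn q := by
            show (if WellOrderingRel (sp p.1.1) (sp p.1.2) then (1:ℤ) else -1)
              = (if WellOrderingRel (sp q.1.1) (sp q.1.2) then (1:ℤ) else -1)
            rw [hUeq, hWeq]
          have : f p = f q := by
            apply Subtype.ext
            show sgn p * m p = sgn q * m q
            rw [hcase, hsgneq]
          exact Or.inl this
        · refine Or.inr ?_
          show |sgn p * m p| < |sgn q * m q|
          rw [habs p, habs q]
          have : m p ≤ m q := by rw [hm]; push_cast; omega
          omega
      · -- equivariant
        intro p
        apply Subtype.ext
        show sgn (HomK2Swap G p) * m (HomK2Swap G p) = -(sgn p * m p)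
        have hmsw : m (HomK2Swap G p) = m p := by
          show ((Module.finrank F (sp p.1.2) : ℤ) + (Module.finrank F (sp p.1.1) : ℤ) - 1)
            = ((Module.finrank F (sp p.1.1) : ℤ) + (Module.finrank F (sp p.1.2) : ℤ) - 1)
          ring
        have hsw : sgn (HomK2Swap G p) = -(sgn p) := by
          show (if WellOrderingRel (sp p.1.2) (sp p.1.1) then (1:ℤ) else -1)
            = -(if WellOrderingRel (sp p.1.1) (sp p.1.2) then (1:ℤ) else -1)
          rcases trichotomous_of WellOrderingRel (sp p.1.1) (sp p.1.2) with h | h | h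
          · have h' : ¬ WellOrderingRel (sp p.1.2) (sp p.1.1) := asymm_of WellOrderingRel h
            rw [if_neg h', if_pos h]
          · exact absurd h (hnesp p)
          · have h' : ¬ WellOrderingRel (sp p.1.1) (sp p.1.2) := asymm_of WellOrderingRel h
            rw [if_pos h, if_neg h']; norm_num
        rw [hmsw, hsw]; ring
    have hinf : sInf {n : ℕ | ∃ f : HomK2 G → QElem n,
        IsZ2Map (HomK2Swap G) (QNeg n) f} ≤ s - 2 := Nat.sInf_le hmemset
    rw [XindZ, if_pos hne]
    have : ((sInf {n : ℕ | ∃ f : HomK2 G → QElem n,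
        IsZ2Map (HomK2Swap G) (QNeg n) f} : ℕ) : ℤ) ≤ ((s - 2 : ℕ) : ℤ) := by
      exact_mod_cast hinf
    omega
  · rw [XindZ, if_neg hne]
    omega
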